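/- Let k be an algebraically closed field of characteristic 7 and let F = (x²+yz)² + xy³ ∈ k[x,y,z]. If M ∈ GL₃(k) and e ∈ kˣ satisfy F ∘ M = e·F (where F ∘ M denotes substituting into F the three linear forms determined by M), then M is a nonzero scalar multiple of the diagonal matrix diag(ω, ω², 1) for some ω ∈ k with ω³ = 1; conversely, F ∘ diag(ω, ω², 1) = ω⁴·F for every ω with ω³ = 1. In particular, the group of automorphisms of ℙ²_k preserving the quartic curve F = 0 is the cyclic group of order 3 consisting of the maps [x:y:z] ↦ [ωx : ω²y : z] with ω³ = 1. -/

import Mathlib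

/-- Substitution of the three linear forms determined by a 3×3 matrix `M` into a
polynomial `F` in three variables: `(F ∘ M)(x) = F(Mx)`. -/
noncomputable def substMat {k : Type*} [CommSemiring k] (M : Matrix (Fin 3) (Fin 3) k)
    (F : MvPolynomial (Fin 3) k) : MvPolynomial (Fin 3) k :=
  MvPolynomial.aeval
    (fun i => ∑ j : Fin 3, MvPolynomial.C (M i j) * MvPolynomial.X j) F

/-- The quartic `F = (x² + yz)² + xy³`, with `(x, y, z) = (X 0, X 1, X 2)`. -/
noncomputable def Fquartic (k : Type*) [CommSemiring k] : MvPolynomial (Fin 3) k :=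
  (MvPolynomial.X 0 ^ 2 + MvPolynomial.X 1 * MvPolynomial.X 2) ^ 2
    + MvPolynomial.X 0 * MvPolynomial.X 1 ^ 3

private lemma diagSub (k : Type*) [Field k] (s ω : k) (hω : ω ^ 3 = 1) :
    substMat (s • Matrix.diagonal ![ω, ω ^ 2, 1]) (Fquartic k)
      = MvPolynomial.C (s ^ 4 * ω ^ 4) * Fquartic k := by
  have hC : (MvPolynomial.C ω : MvPolynomial (Fin 3) k) ^ 3 = 1 := by
    rw [← map_pow, hω, map_one]
  simp only [substMat, Fquartic, map_add, map_mul, map_pow, map_one, MvPolynomial.aeval_X,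
    Fin.sum_univ_three, Matrix.smul_apply, Matrix.diagonal_apply, smul_eq_mul,
    Fin.isValue, show (0:Fin 3) ≠ 1 by decide, show (0:Fin 3) ≠ 2 by decide,
    show (1:Fin 3) ≠ 0 by decide, show (1:Fin 3) ≠ 2 by decide,
    show (2:Fin 3) ≠ 0 by decide, show (2:Fin 3) ≠ 1 by decide,
    if_true, if_false, ite_true, ite_false, eq_self_iff_true,
    Matrix.cons_val', Matrix.cons_val_zero, Matrix.cons_val_one, Matrix.head_cons,
    Matrix.cons_val_two, Matrix.tail_cons, map_zero, mul_zero, zero_mul, add_zero, zero_add]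
  linear_combination (MvPolynomial.C s ^ 4 * MvPolynomial.C ω ^ 4 *
    MvPolynomial.X 0 * MvPolynomial.X 1 ^ 3) * hC

set_option maxHeartbeats 4000000 in
private lemma stmt11_key {k : Type*} [Field k] (h7 : (7:k) = 0)
    (a b c d f g h i j e : k)
    (hdet : a*f*j - a*g*i - b*d*j + b*g*h + c*d*i - c*f*h ≠ 0) (he : e ≠ 0)
    (hev : ∀ x y z : k,
      ((a*x + b*y + c*z)^2 + (d*x + f*y + g*z)*(h*x + i*y + j*z))^2
        + (a*x + b*y + c*z)*(d*x + f*y + g*z)^3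
      = e * ((x^2 + y*z)^2 + x*y^3)) :
    b = 0 ∧ c = 0 ∧ d = 0 ∧ g = 0 ∧ h = 0 ∧ i = 0 ∧ j ≠ 0 ∧ j^3 = a^3 ∧ f*j = a^2 := by
  have h2 : (2:k) ≠ 0 := fun h2z => one_ne_zero (α := k) (by linear_combination h7 - 3*h2z)
  have h004 : c^4 + 2*c^2*g*j + c*g^3 + g^2*j^2 = 0 := by
    linear_combination 2*hev 0 4 0 + (-2)*hev 0 6 4 + (-2)*hev 0 6 1 + 2*hev 6 6 6 + (-2)*hev 6 2 2 + (-3)*hev 0 2 4 + (-2)*hev 1 4 4 + 2*hev 4 3 3 + hev 6 4 4 + (-258*a^4 - 1696*a^3*b - 1696*a^3*c - 2688*a^2*b^2 - 5376*a^2*b*c - 2688*a^2*c^2 - 516*a^2*d*h - 848*a^2*d*i - 848*a^2*d*j - 848*a^2*f*h - 896*a^2*f*i - 896*a^2*f*j - 848*a^2*g*h - 896*a^2*g*i - 896*a^2*g*j - 1696*a*b^3 - 5088*a*b^2*c - 5088*a*b*c^2 - 1696*a*b*d*h - 1792*a*b*d*i - 1792*a*b*d*j - 1792*a*b*f*h -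 1696*a*b*f*i - 1696*a*b*f*j - 1792*a*b*g*h - 1696*a*b*g*i - 1696*a*b*g*j - 1696*a*c^3 - 1696*a*c*d*h - 1792*a*c*d*i - 1792*a*c*d*j - 1792*a*c*f*h - 1696*a*c*f*i - 1696*a*c*f*j - 1792*a*c*g*h - 1696*a*c*g*i - 1696*a*c*g*j - 258*a*d^3 - 1272*a*d^2*f - 1272*a*d^2*g - 1344*a*d*f^2 - 2688*a*d*f*g - 1344*a*d*g^2 - 424*a*f^3 - 1272*a*f^2*g - 1272*a*f*g^2 - 424*a*g^3 + 322*b^4 - 120*b^3*c - 900*b^2*c^2 - 896*b^2*d*h - 848*b^2*d*i - 848*b^2*d*j - 848*b^2*f*h + 644*b^2*f*i - 60*b^2*f*j - 848*b^2*g*h - 60*b^2*g*i - 300*b^2*g*j - 744*b*c^3 - 1792*b*c*d*h - 1696*b*c*d*i - 1696*b*c*d*j - 1696*b*c*f*h - 120*b*c*f*i - 600*b*c*f*j - 1696*b*c*g*h - 600*b*c*g*i - 744*b*c*g*j - 424*b*d^3 - 1344*b*d^2*f - 1344*b*d^2*g - 1272*b*d*f^2 - 2544*b*d*f*g - 1272*b*d*g^2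 + 322*b*f^3 - 90*b*f^2*g - 450*b*f*g^2 - 186*b*g^3 - 169*c^4 - 896*c^2*d*h - 848*c^2*d*i - 848*c^2*d*j - 848*c^2*f*h - 300*c^2*f*i - 372*c^2*f*j - 848*c^2*g*h - 372*c^2*g*i - 338*c^2*g*j - 424*c*d^3 - 1344*c*d^2*f - 1344*c*d^2*g - 1272*c*d*f^2 - 2544*c*d*f*g - 1272*c*d*g^2 - 30*c*f^3 - 450*c*f^2*g - 558*c*f*g^2 - 169*c*g^3 - 258*d^2*h^2 - 848*d^2*h*i - 848*d^2*h*j - 448*d^2*i^2 - 896*d^2*i*j - 448*d^2*j^2 - 848*d*f*h^2 - 1792*d*f*h*i - 1792*d*f*h*j - 848*d*f*i^2 - 1696*d*f*i*j - 848*d*f*j^2 - 848*d*g*h^2 - 1792*d*g*h*i - 1792*d*g*h*j - 848*d*g*i^2 - 1696*d*g*i*j - 848*d*g*j^2 - 448*f^2*h^2 - 848*f^2*h*i - 848*f^2*h*j + 322*f^2*i^2 - 60*f^2*i*j - 150*f^2*j^2 - 896*f*g*h^2 - 1696*f*g*h*i - 1696*f*g*h*j - 60*f*g*i^2 - 600*f*g*i*j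 - 372*f*g*j^2 - 448*g^2*h^2 - 848*g^2*h*i - 848*g^2*h*j - 150*g^2*i^2 - 372*g^2*i*j - 169*g^2*j^2 + 1728*e) * h7
  have h103 : 4*a*c^3 + 4*a*c*g*j + a*g^3 + 2*c^2*d*j + 2*c^2*g*h + 3*c*d*g^2 + 2*d*g*j^2 + 2*g^2*h*j = 0 := by
    linear_combination -hev 0 4 0 + 3*hev 0 6 4 + (-2)*hev 0 6 1 + hev 1 5 2 + 3*hev 6 6 6 + (-3)*hev 3 1 3 - hev 2 4 2 - hev 6 2 2 + 2*hev 2 1 3 + 2*hev 0 2 4 + 3*hev 6 0 3 + (-3)*hev 1 4 4 + 3*hev 4 3 3 + 2*hev 6 4 4 + (-1373*a^4 - 3232*a^3*b - 4276*a^3*c - 4476*a^2*b^2 - 8916*a^2*b*c - 5202*a^2*c^2 - 2746*a^2*d*h - 1616*a^2*d*i - 2138*a^2*d*j - 1616*a^2*f*h - 1492*a^2*f*i - 1486*a^2*f*j - 2138*a^2*g*h - 1486*a^2*g*i - 1734*a^2*g*j - 2704*a*b^3 - 8076*a*b^2*c - 8028*a*b*c^2 - 3232*a*b*d*h - 2984*a*b*d*i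 - 2972*a*b*d*j - 2984*a*b*f*h - 2704*a*b*f*i - 2692*a*b*f*j - 2972*a*b*g*h - 2692*a*b*g*i - 2676*a*b*g*j - 2904*a*c^3 - 4276*a*c*d*h - 2972*a*c*d*i - 3468*a*c*d*j - 2972*a*c*f*h - 2692*a*c*f*i - 2676*a*c*f*j - 3468*a*c*g*h - 2676*a*c*g*i - 2904*a*c*g*j - 1373*a*d^3 - 2424*a*d^2*f - 3207*a*d^2*g - 2238*a*d*f^2 - 4458*a*d*f*g - 2601*a*d*g^2 - 676*a*f^3 - 2019*a*f^2*g - 2007*a*f*g^2 - 726*a*g^3 - 757*b^4 - 3544*b^3*c - 4860*b^2*c^2 - 1492*b^2*d*h - 1352*b^2*d*i - 1346*b^2*d*j - 1352*b^2*f*h - 1514*b^2*f*i - 1772*b^2*f*j - 1346*b^2*g*h - 1772*b^2*g*i - 1620*b^2*g*j - 2992*b*c^3 - 2972*b*c*d*h - 2692*b*c*d*i - 2676*b*c*d*j - 2692*b*c*f*h - 3544*b*c*f*i - 3240*b*c*f*j - 2676*b*c*g*h - 3240*b*c*g*i - 2992*b*c*g*j - 808*b*d^3 - 2238*b*d^2*f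 - 2229*b*d^2*g - 2028*b*d*f^2 - 4038*b*d*f*g - 2007*b*d*g^2 - 757*b*f^3 - 2658*b*f^2*g - 2430*b*f*g^2 - 748*b*g^3 - 757*c^4 - 1734*c^2*d*h - 1338*c^2*d*i - 1452*c^2*d*j - 1338*c^2*f*h - 1620*c^2*f*i - 1496*c^2*f*j - 1452*c^2*g*h - 1496*c^2*g*i - 1514*c^2*g*j - 1069*c*d^3 - 2229*c*d^2*f - 2601*c*d^2*g - 2019*c*d*f^2 - 4014*c*d*f*g - 2178*c*d*g^2 - 886*c*f^3 - 2430*c*f^2*g - 2244*c*f*g^2 - 757*c*g^3 - 1373*d^2*h^2 - 1616*d^2*h*i - 2138*d^2*h*j - 746*d^2*i^2 - 1486*d^2*i*j - 867*d^2*j^2 - 1616*d*f*h^2 - 2984*d*f*h*i - 2972*d*f*h*j - 1352*d*f*i^2 - 2692*d*f*i*j - 1338*d*f*j^2 - 2138*d*g*h^2 - 2972*d*g*h*i - 3468*d*g*h*j - 1346*d*g*i^2 - 2676*d*g*i*j - 1452*d*g*j^2 - 746*f^2*h^2 - 1352*f^2*h*i - 1346*f^2*h*j - 757*f^2*i^2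 - 1772*f^2*i*j - 810*f^2*j^2 - 1486*f*g*h^2 - 2692*f*g*h*i - 2676*f*g*h*j - 1772*f*g*i^2 - 3240*f*g*i*j - 1496*f*g*j^2 - 867*g^2*h^2 - 1338*g^2*h*i - 1452*g^2*h*j - 810*g^2*i^2 - 1496*g^2*i*j - 757*g^2*j^2 + 4345*e) * h7
  have h013 : 4*b*c^3 + 4*b*c*g*j + b*g^3 + 2*c^2*f*j + 2*c^2*g*i + 3*c*f*g^2 + 2*f*g*j^2 + 2*g^2*i*j = 0 := by
    linear_combination (-3)*hev 0 4 0 + (-3)*hev 0 6 4 + (-2)*hev 0 6 1 - hev 6 6 6 + hev 6 2 2 + 2*hev 0 2 4 + hev 1 4 4 - hev 4 3 3 + 3*hev 6 4 4 + (-519*a^4 - 880*a^3*b - 880*a^3*c - 384*a^2*b^2 - 768*a^2*b*c - 384*a^2*c^2 - 1038*a^2*d*h - 440*a^2*d*i - 440*a^2*d*j - 440*a^2*f*h - 128*a^2*f*i - 128*a^2*f*j - 440*a^2*g*h - 128*a^2*g*i - 128*a^2*g*j + 80*a*b^3 + 240*a*b^2*c + 240*a*b*c^2 - 880*a*b*d*h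 - 256*a*b*d*i - 256*a*b*d*j - 256*a*b*f*h + 80*a*b*f*i + 80*a*b*f*j - 256*a*b*g*h + 80*a*b*g*i + 80*a*b*g*j + 80*a*c^3 - 880*a*c*d*h - 256*a*c*d*i - 256*a*c*d*j - 256*a*c*f*h + 80*a*c*f*i + 80*a*c*f*j - 256*a*c*g*h + 80*a*c*g*i + 80*a*c*g*j - 519*a*d^3 - 660*a*d^2*f - 660*a*d^2*g - 192*a*d*f^2 - 384*a*d*f*g - 192*a*d*g^2 + 20*a*f^3 + 60*a*f^2*g + 60*a*f*g^2 + 20*a*g^3 + 1079*b^4 + 1884*b^3*c + 1722*b^2*c^2 - 128*b^2*d*h + 40*b^2*d*i + 40*b^2*d*j + 40*b^2*f*h + 2158*b^2*f*i + 942*b^2*f*j + 40*b^2*g*h + 942*b^2*g*i + 574*b^2*g*j + 712*b*c^3 - 256*b*c*d*h + 80*b*c*d*i + 80*b*c*d*j + 80*b*c*f*h + 1884*b*c*f*i + 1148*b*c*f*j + 80*b*c*g*h + 1148*b*c*g*i + 712*b*c*g*j - 220*b*d^3 - 192*b*d^2*f - 192*b*d^2*g + 60*b*d*f^2 + 120*b*d*f*g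 + 60*b*d*g^2 + 1079*b*f^3 + 1413*b*f^2*g + 861*b*f*g^2 + 178*b*g^3 + 85*c^4 - 128*c^2*d*h + 40*c^2*d*i + 40*c^2*d*j + 40*c^2*f*h + 574*c^2*f*i + 356*c^2*f*j + 40*c^2*g*h + 356*c^2*g*i + 170*c^2*g*j - 220*c*d^3 - 192*c*d^2*f - 192*c*d^2*g + 60*c*d*f^2 + 120*c*d*f*g + 60*c*d*g^2 + 471*c*f^3 + 861*c*f^2*g + 534*c*f*g^2 + 85*c*g^3 - 519*d^2*h^2 - 440*d^2*h*i - 440*d^2*h*j - 64*d^2*i^2 - 128*d^2*i*j - 64*d^2*j^2 - 440*d*f*h^2 - 256*d*f*h*i - 256*d*f*h*j + 40*d*f*i^2 + 80*d*f*i*j + 40*d*f*j^2 - 440*d*g*h^2 - 256*d*g*h*i - 256*d*g*h*j + 40*d*g*i^2 + 80*d*g*i*j + 40*d*g*j^2 - 64*f^2*h^2 + 40*f^2*h*i + 40*f^2*h*j + 1079*f^2*i^2 + 942*f^2*i*j + 287*f^2*j^2 - 128*f*g*h^2 + 80*f*g*h*i + 80*f*g*h*j + 942*f*g*i^2 + 1148*f*g*i*j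 + 356*f*g*j^2 - 64*g^2*h^2 + 40*g^2*h*i + 40*g^2*h*j + 287*g^2*i^2 + 356*g^2*i*j + 85*g^2*j^2 + 340*e) * h7
  have h022 : 6*b^2*c^2 + 2*b^2*g*j + 4*b*c*f*j + 4*b*c*g*i + 3*b*f*g^2 + 2*c^2*f*i + 3*c*f^2*g + f^2*j^2 + 4*f*g*i*j + g^2*i^2 = e := by
    linear_combination 3*hev 0 4 0 + 2*hev 0 6 4 - hev 0 6 1 + 2*hev 6 6 6 + (-2)*hev 6 2 2 + 3*hev 0 2 4 + (-2)*hev 1 4 4 + 2*hev 4 3 3 + hev 6 4 4 + (-258*a^4 - 1696*a^3*b - 1696*a^3*c - 2688*a^2*b^2 - 5376*a^2*b*c - 2688*a^2*c^2 - 516*a^2*d*h - 848*a^2*d*i - 848*a^2*d*j - 848*a^2*f*h - 896*a^2*f*i - 896*a^2*f*j - 848*a^2*g*h - 896*a^2*g*i - 896*a^2*g*j - 1696*a*b^3 - 5088*a*b^2*c - 5088*a*b*c^2 - 1696*a*b*d*h - 1792*a*b*d*i - 1792*a*b*d*j - 1792*a*b*f*h - 1696*a*b*f*i - 1696*a*b*f*j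 - 1792*a*b*g*h - 1696*a*b*g*i - 1696*a*b*g*j - 1696*a*c^3 - 1696*a*c*d*h - 1792*a*c*d*i - 1792*a*c*d*j - 1792*a*c*f*h - 1696*a*c*f*i - 1696*a*c*f*j - 1792*a*c*g*h - 1696*a*c*g*i - 1696*a*c*g*j - 258*a*d^3 - 1272*a*d^2*f - 1272*a*d^2*g - 1344*a*d*f^2 - 2688*a*d*f*g - 1344*a*d*g^2 - 424*a*f^3 - 1272*a*f^2*g - 1272*a*f*g^2 - 424*a*g^3 - 654*b^4 - 2328*b^3*c - 3234*b^2*c^2 - 896*b^2*d*h - 848*b^2*d*i - 848*b^2*d*j - 848*b^2*f*h - 1308*b^2*f*i - 1164*b^2*f*j - 848*b^2*g*h - 1164*b^2*g*i - 1078*b^2*g*j - 2064*b*c^3 - 1792*b*c*d*h - 1696*b*c*d*i - 1696*b*c*d*j - 1696*b*c*f*h - 2328*b*c*f*i - 2156*b*c*f*j - 1696*b*c*g*h - 2156*b*c*g*i - 2064*b*c*g*j - 424*b*d^3 - 1344*b*d^2*f - 1344*b*d^2*g - 1272*b*d*f^2 - 2544*b*d*f*g - 1272*b*d*g^2 - 654*b*f^3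 - 1746*b*f^2*g - 1617*b*f*g^2 - 516*b*g^3 - 535*c^4 - 896*c^2*d*h - 848*c^2*d*i - 848*c^2*d*j - 848*c^2*f*h - 1078*c^2*f*i - 1032*c^2*f*j - 848*c^2*g*h - 1032*c^2*g*i - 1070*c^2*g*j - 424*c*d^3 - 1344*c*d^2*f - 1344*c*d^2*g - 1272*c*d*f^2 - 2544*c*d*f*g - 1272*c*d*g^2 - 582*c*f^3 - 1617*c*f^2*g - 1548*c*f*g^2 - 535*c*g^3 - 258*d^2*h^2 - 848*d^2*h*i - 848*d^2*h*j - 448*d^2*i^2 - 896*d^2*i*j - 448*d^2*j^2 - 848*d*f*h^2 - 1792*d*f*h*i - 1792*d*f*h*j - 848*d*f*i^2 - 1696*d*f*i*j - 848*d*f*j^2 - 848*d*g*h^2 - 1792*d*g*h*i - 1792*d*g*h*j - 848*d*g*i^2 - 1696*d*g*i*j - 848*d*g*j^2 - 448*f^2*h^2 - 848*f^2*h*i - 848*f^2*h*j - 654*f^2*i^2 - 1164*f^2*i*j - 539*f^2*j^2 - 896*f*g*h^2 - 1696*f*g*h*i - 1696*f*g*h*j - 1164*f*g*i^2 - 2156*f*g*i*j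 - 1032*f*g*j^2 - 448*g^2*h^2 - 848*g^2*h*i - 848*g^2*h*j - 539*g^2*i^2 - 1032*g^2*i*j - 535*g^2*j^2 + 2117*e) * h7
  have h031 : 4*b^3*c + 2*b^2*f*j + 2*b^2*g*i + 4*b*c*f*i + 3*b*f^2*g + c*f^3 + 2*f^2*i*j + 2*f*g*i^2 = 0 := by
    linear_combination 3*hev 0 4 0 + 3*hev 0 6 4 + (-2)*hev 0 6 1 + (-2)*hev 6 6 6 + 2*hev 6 2 2 + (-2)*hev 0 2 4 + 2*hev 1 4 4 + (-2)*hev 4 3 3 - hev 6 4 4 + (258*a^4 + 1696*a^3*b + 1696*a^3*c + 2688*a^2*b^2 + 5376*a^2*b*c + 2688*a^2*c^2 + 516*a^2*d*h + 848*a^2*d*i + 848*a^2*d*j + 848*a^2*f*h + 896*a^2*f*i + 896*a^2*f*j + 848*a^2*g*h + 896*a^2*g*i + 896*a^2*g*j + 1696*a*b^3 + 5088*a*b^2*c + 5088*a*b*c^2 + 1696*a*b*d*h + 1792*a*b*d*i + 1792*a*b*d*j + 1792*a*b*f*h + 1696*a*b*f*i + 1696*a*b*f*j + 1792*a*b*g*h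 + 1696*a*b*g*i + 1696*a*b*g*j + 1696*a*c^3 + 1696*a*c*d*h + 1792*a*c*d*i + 1792*a*c*d*j + 1792*a*c*f*h + 1696*a*c*f*i + 1696*a*c*f*j + 1792*a*c*g*h + 1696*a*c*g*i + 1696*a*c*g*j + 258*a*d^3 + 1272*a*d^2*f + 1272*a*d^2*g + 1344*a*d*f^2 + 2688*a*d*f*g + 1344*a*d*g^2 + 424*a*f^3 + 1272*a*f^2*g + 1272*a*f*g^2 + 424*a*g^3 + 62*b^4 + 212*b^3*c + 804*b^2*c^2 + 896*b^2*d*h + 848*b^2*d*i + 848*b^2*d*j + 848*b^2*f*h + 124*b^2*f*i + 106*b^2*f*j + 848*b^2*g*h + 106*b^2*g*i + 268*b^2*g*j + 904*b*c^3 + 1792*b*c*d*h + 1696*b*c*d*i + 1696*b*c*d*j + 1696*b*c*f*h + 212*b*c*f*i + 536*b*c*f*j + 1696*b*c*g*h + 536*b*c*g*i + 904*b*c*g*j + 424*b*d^3 + 1344*b*d^2*f + 1344*b*d^2*g + 1272*b*d*f^2 + 2544*b*d*f*g + 1272*b*d*g^2 + 62*b*f^3 + 159*b*f^2*g + 402*b*f*g^2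 + 226*b*g^3 + 316*c^4 + 896*c^2*d*h + 848*c^2*d*i + 848*c^2*d*j + 848*c^2*f*h + 268*c^2*f*i + 452*c^2*f*j + 848*c^2*g*h + 452*c^2*g*i + 632*c^2*g*j + 424*c*d^3 + 1344*c*d^2*f + 1344*c*d^2*g + 1272*c*d*f^2 + 2544*c*d*f*g + 1272*c*d*g^2 + 53*c*f^3 + 402*c*f^2*g + 678*c*f*g^2 + 316*c*g^3 + 258*d^2*h^2 + 848*d^2*h*i + 848*d^2*h*j + 448*d^2*i^2 + 896*d^2*i*j + 448*d^2*j^2 + 848*d*f*h^2 + 1792*d*f*h*i + 1792*d*f*h*j + 848*d*f*i^2 + 1696*d*f*i*j + 848*d*f*j^2 + 848*d*g*h^2 + 1792*d*g*h*i + 1792*d*g*h*j + 848*d*g*i^2 + 1696*d*g*i*j + 848*d*g*j^2 + 448*f^2*h^2 + 848*f^2*h*i + 848*f^2*h*j + 62*f^2*i^2 + 106*f^2*i*j + 134*f^2*j^2 + 896*f*g*h^2 + 1696*f*g*h*i + 1696*f*g*h*j + 106*f*g*i^2 + 536*f*g*i*j + 452*f*g*j^2 + 448*g^2*h^2 + 848*g^2*h*i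 + 848*g^2*h*j + 134*g^2*i^2 + 452*g^2*i*j + 316*g^2*j^2 - 1712*e) * h7
  have h040 : b^4 + 2*b^2*f*i + b*f^3 + f^2*i^2 = 0 := by
    linear_combination 2*hev 0 4 0 + (-73*b^4 - 146*b^2*f*i - 73*b*f^3 - 73*f^2*i^2) * h7
  have h112 : 12*a*b*c^2 + 4*a*b*g*j + 4*a*c*f*j + 4*a*c*g*i + 3*a*f*g^2 + 4*b*c*d*j + 4*b*c*g*h + 3*b*d*g^2 + 2*c^2*d*i + 2*c^2*f*h + 6*c*d*f*g + 2*d*f*j^2 + 4*d*g*i*j + 4*f*g*h*j + 2*g^2*h*i = 0 := by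
    linear_combination 3*hev 0 4 0 + 3*hev 0 6 4 + (-3)*hev 0 6 1 - hev 3 5 2 - hev 1 5 2 + 2*hev 6 6 6 - hev 3 1 3 + 3*hev 2 4 2 + 2*hev 6 2 2 - hev 2 1 3 + hev 0 2 4 + (-2)*hev 6 0 3 - hev 1 4 4 + 2*hev 4 3 3 + 3*hev 6 4 4 + (-980*a^4 - 3628*a^3*b - 2868*a^3*c - 4122*a^2*b^2 - 8292*a^2*b*c - 3534*a^2*c^2 - 1960*a^2*d*h - 1814*a^2*d*i - 1434*a^2*d*j - 1814*a^2*f*h - 1374*a^2*f*i - 1382*a^2*f*j - 1434*a^2*g*h - 1382*a^2*g*i - 1178*a^2*g*j - 2212*a*b^3 - 6804*a*b^2*c - 6792*a*b*c^2 - 3628*a*b*d*h - 2748*a*b*d*i - 2764*a*b*d*j - 2748*a*b*f*h - 2212*a*b*f*i - 2268*a*b*f*j - 2764*a*b*g*h - 2268*a*b*g*i - 2264*a*b*g*j - 2028*a*c^3 - 2868*a*c*d*h - 2764*a*c*d*i - 2356*a*c*d*j - 2764*a*c*f*h - 2268*a*c*f*i - 2264*a*c*f*j - 2356*a*c*g*h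 - 2264*a*c*g*i - 2028*a*c*g*j - 980*a*d^3 - 2721*a*d^2*f - 2151*a*d^2*g - 2061*a*d*f^2 - 4146*a*d*f*g - 1767*a*d*g^2 - 553*a*f^3 - 1701*a*f^2*g - 1698*a*f*g^2 - 507*a*g^3 - 514*b^4 - 2944*b^3*c - 4248*b^2*c^2 - 1374*b^2*d*h - 1106*b^2*d*i - 1134*b^2*d*j - 1106*b^2*f*h - 1028*b^2*f*i - 1472*b^2*f*j - 1134*b^2*g*h - 1472*b^2*g*i - 1416*b^2*g*j - 2584*b*c^3 - 2764*b*c*d*h - 2268*b*c*d*i - 2264*b*c*d*j - 2268*b*c*f*h - 2944*b*c*f*i - 2832*b*c*f*j - 2264*b*c*g*h - 2832*b*c*g*i - 2584*b*c*g*j - 907*b*d^3 - 2061*b*d^2*f - 2073*b*d^2*g - 1659*b*d*f^2 - 3402*b*d*f*g - 1698*b*d*g^2 - 514*b*f^3 - 2208*b*f^2*g - 2124*b*f*g^2 - 646*b*g^3 - 573*c^4 - 1178*c^2*d*h - 1132*c^2*d*i - 1014*c^2*d*j - 1132*c^2*f*h - 1416*c^2*f*i - 1292*c^2*f*j - 1014*c^2*g*h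 - 1292*c^2*g*i - 1146*c^2*g*j - 717*c*d^3 - 2073*c*d^2*f - 1767*c*d^2*g - 1701*c*d*f^2 - 3396*c*d*f*g - 1521*c*d*g^2 - 736*c*f^3 - 2124*c*f^2*g - 1938*c*f*g^2 - 573*c*g^3 - 980*d^2*h^2 - 1814*d^2*h*i - 1434*d^2*h*j - 687*d^2*i^2 - 1382*d^2*i*j - 589*d^2*j^2 - 1814*d*f*h^2 - 2748*d*f*h*i - 2764*d*f*h*j - 1106*d*f*i^2 - 2268*d*f*i*j - 1132*d*f*j^2 - 1434*d*g*h^2 - 2764*d*g*h*i - 2356*d*g*h*j - 1134*d*g*i^2 - 2264*d*g*i*j - 1014*d*g*j^2 - 687*f^2*h^2 - 1106*f^2*h*i - 1134*f^2*h*j - 514*f^2*i^2 - 1472*f^2*i*j - 708*f^2*j^2 - 1382*f*g*h^2 - 2268*f*g*h*i - 2264*f*g*h*j - 1472*f*g*i^2 - 2832*f*g*i*j - 1292*f*g*j^2 - 589*g^2*h^2 - 1132*g^2*h*i - 1014*g^2*h*j - 708*g^2*i^2 - 1292*g^2*i*j - 573*g^2*j^2 + 3623*e) * h7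
  have h121 : 12*a*b^2*c + 4*a*b*f*j + 4*a*b*g*i + 4*a*c*f*i + 3*a*f^2*g + 2*b^2*d*j + 2*b^2*g*h + 4*b*c*d*i + 4*b*c*f*h + 6*b*d*f*g + 3*c*d*f^2 + 4*d*f*i*j + 2*d*g*i^2 + 2*f^2*h*j + 4*f*g*h*i = 0 := by
    linear_combination hev 0 4 0 + (-3)*hev 0 6 4 + 3*hev 3 5 2 + 3*hev 1 5 2 + (-3)*hev 6 6 6 + 3*hev 3 1 3 - hev 2 4 2 + 2*hev 6 2 2 - hev 0 2 4 + hev 6 0 3 + 3*hev 1 4 4 - hev 4 3 3 + (-3)*hev 6 4 4 + (524*a^4 + 3044*a^3*b + 2716*a^3*c + 4038*a^2*b^2 + 8700*a^2*b*c + 4074*a^2*c^2 + 1048*a^2*d*h + 1522*a^2*d*i + 1358*a^2*d*j + 1522*a^2*f*h + 1346*a^2*f*i + 1450*a^2*f*j + 1358*a^2*g*h + 1450*a^2*g*i + 1358*a^2*g*j + 1988*a*b^3 + 7368*a*b^2*c + 7836*a*b*c^2 + 3044*a*b*d*h + 2692*a*b*d*i + 2900*a*b*d*j + 2692*a*b*f*h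 + 1988*a*b*f*i + 2456*a*b*f*j + 2900*a*b*g*h + 2456*a*b*g*i + 2612*a*b*g*j + 2500*a*c^3 + 2716*a*c*d*h + 2900*a*c*d*i + 2716*a*c*d*j + 2900*a*c*f*h + 2456*a*c*f*i + 2612*a*c*f*j + 2716*a*c*g*h + 2612*a*c*g*i + 2500*a*c*g*j + 524*a*d^3 + 2283*a*d^2*f + 2037*a*d^2*g + 2019*a*d*f^2 + 4350*a*d*f*g + 2037*a*d*g^2 + 497*a*f^3 + 1842*a*f^2*g + 1959*a*f*g^2 + 625*a*g^3 + 584*b^4 + 2960*b^3*c + 4428*b^2*c^2 + 1346*b^2*d*h + 994*b^2*d*i + 1228*b^2*d*j + 994*b^2*f*h + 1168*b^2*f*i + 1480*b^2*f*j + 1228*b^2*g*h + 1480*b^2*g*i + 1476*b^2*g*j + 2816*b*c^3 + 2900*b*c*d*h + 2456*b*c*d*i + 2612*b*c*d*j + 2456*b*c*f*h + 2960*b*c*f*i + 2952*b*c*f*j + 2612*b*c*g*h + 2952*b*c*g*i + 2816*b*c*g*j + 761*b*d^3 + 2019*b*d^2*f + 2175*b*d^2*g + 1491*b*d*f^2 +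 3684*b*d*f*g + 1959*b*d*g^2 + 584*b*f^3 + 2220*b*f^2*g + 2214*b*f*g^2 + 704*b*g^3 + 651*c^4 + 1358*c^2*d*h + 1306*c^2*d*i + 1250*c^2*d*j + 1306*c^2*f*h + 1476*c^2*f*i + 1408*c^2*f*j + 1250*c^2*g*h + 1408*c^2*g*i + 1302*c^2*g*j + 679*c*d^3 + 2175*c*d^2*f + 2037*c*d^2*g + 1842*c*d*f^2 + 3918*c*d*f*g + 1875*c*d*g^2 + 740*c*f^3 + 2214*c*f^2*g + 2112*c*f*g^2 + 651*c*g^3 + 524*d^2*h^2 + 1522*d^2*h*i + 1358*d^2*h*j + 673*d^2*i^2 + 1450*d^2*i*j + 679*d^2*j^2 + 1522*d*f*h^2 + 2692*d*f*h*i + 2900*d*f*h*j + 994*d*f*i^2 + 2456*d*f*i*j + 1306*d*f*j^2 + 1358*d*g*h^2 + 2900*d*g*h*i + 2716*d*g*h*j + 1228*d*g*i^2 + 2612*d*g*i*j + 1250*d*g*j^2 + 673*f^2*h^2 + 994*f^2*h*i + 1228*f^2*h*j + 584*f^2*i^2 + 1480*f^2*i*j + 738*f^2*j^2 + 1450*f*g*h^2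 + 2456*f*g*h*i + 2612*f*g*h*j + 1480*f*g*i^2 + 2952*f*g*i*j + 1408*f*g*j^2 + 679*g^2*h^2 + 1306*g^2*h*i + 1250*g^2*h*j + 738*g^2*i^2 + 1408*g^2*i*j + 651*g^2*j^2 - 3209*e) * h7
  have h400 : a^4 + 2*a^2*d*h + a*d^3 + d^2*h^2 = e := by
    linear_combination 3*hev 6 6 6 + (-2)*hev 6 2 2 + hev 1 4 4 + (-3)*hev 4 3 3 + (-3)*hev 6 4 4 + (480*a^4 + 80*a^3*b + 80*a^3*c - 1248*a^2*b^2 - 2496*a^2*b*c - 1248*a^2*c^2 + 960*a^2*d*h + 40*a^2*d*i + 40*a^2*d*j + 40*a^2*f*h - 416*a^2*f*i - 416*a^2*f*j + 40*a^2*g*h - 416*a^2*g*i - 416*a^2*g*j - 1360*a*b^3 - 4080*a*b^2*c - 4080*a*b*c^2 + 80*a*b*d*h - 832*a*b*d*i - 832*a*b*d*j - 832*a*b*f*h - 1360*a*b*f*i - 1360*a*b*f*j - 832*a*b*g*h - 1360*a*b*g*i - 1360*a*b*g*j - 1360*a*c^3 + 80*a*c*d*h - 832*a*c*d*i - 832*a*c*d*j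 - 832*a*c*f*h - 1360*a*c*f*i - 1360*a*c*f*j - 832*a*c*g*h - 1360*a*c*g*i - 1360*a*c*g*j + 480*a*d^3 + 60*a*d^2*f + 60*a*d^2*g - 624*a*d*f^2 - 1248*a*d*f*g - 624*a*d*g^2 - 340*a*f^3 - 1020*a*f^2*g - 1020*a*f*g^2 - 340*a*g^3 - 443*b^4 - 1772*b^3*c - 2658*b^2*c^2 - 416*b^2*d*h - 680*b^2*d*i - 680*b^2*d*j - 680*b^2*f*h - 886*b^2*f*i - 886*b^2*f*j - 680*b^2*g*h - 886*b^2*g*i - 886*b^2*g*j - 1772*b*c^3 - 832*b*c*d*h - 1360*b*c*d*i - 1360*b*c*d*j - 1360*b*c*f*h - 1772*b*c*f*i - 1772*b*c*f*j - 1360*b*c*g*h - 1772*b*c*g*i - 1772*b*c*g*j + 20*b*d^3 - 624*b*d^2*f - 624*b*d^2*g - 1020*b*d*f^2 - 2040*b*d*f*g - 1020*b*d*g^2 - 443*b*f^3 - 1329*b*f^2*g - 1329*b*f*g^2 - 443*b*g^3 - 443*c^4 - 416*c^2*d*h - 680*c^2*d*i - 680*c^2*d*j - 680*c^2*f*h -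 886*c^2*f*i - 886*c^2*f*j - 680*c^2*g*h - 886*c^2*g*i - 886*c^2*g*j + 20*c*d^3 - 624*c*d^2*f - 624*c*d^2*g - 1020*c*d*f^2 - 2040*c*d*f*g - 1020*c*d*g^2 - 443*c*f^3 - 1329*c*f^2*g - 1329*c*f*g^2 - 443*c*g^3 + 480*d^2*h^2 + 40*d^2*h*i + 40*d^2*h*j - 208*d^2*i^2 - 416*d^2*i*j - 208*d^2*j^2 + 40*d*f*h^2 - 832*d*f*h*i - 832*d*f*h*j - 680*d*f*i^2 - 1360*d*f*i*j - 680*d*f*j^2 + 40*d*g*h^2 - 832*d*g*h*i - 832*d*g*h*j - 680*d*g*i^2 - 1360*d*g*i*j - 680*d*g*j^2 - 208*f^2*h^2 - 680*f^2*h*i - 680*f^2*h*j - 443*f^2*i^2 - 886*f^2*i*j - 443*f^2*j^2 - 416*f*g*h^2 - 1360*f*g*h*i - 1360*f*g*h*j - 886*f*g*i^2 - 1772*f*g*i*j - 886*f*g*j^2 - 208*g^2*h^2 - 680*g^2*h*i - 680*g^2*h*j - 443*g^2*i^2 - 886*g^2*i*j - 443*g^2*j^2 + 719*e) * h7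
  have h211 : 12*a^2*b*c + 2*a^2*f*j + 2*a^2*g*i + 4*a*b*d*j + 4*a*b*g*h + 4*a*c*d*i + 4*a*c*f*h + 6*a*d*f*g + 4*b*c*d*h + 3*b*d^2*g + 3*c*d^2*f + 2*d^2*i*j + 4*d*f*h*j + 4*d*g*h*i + 2*f*g*h^2 = 2*e := by
    linear_combination 3*hev 0 6 1 + 3*hev 3 5 2 + hev 1 5 2 + hev 6 6 6 + (-3)*hev 2 4 2 + 2*hev 6 2 2 + 3*hev 2 1 3 + (-2)*hev 0 2 4 - hev 6 0 3 + (-2)*hev 1 4 4 + (-3)*hev 4 3 3 - hev 6 4 4 + (-110*a^4 - 600*a^3*b - 144*a^3*c - 912*a^2*b^2 - 1308*a^2*b*c - 336*a^2*c^2 - 220*a^2*d*h - 300*a^2*d*i - 72*a^2*d*j - 300*a^2*f*h - 304*a^2*f*i - 218*a^2*f*j - 72*a^2*g*h - 218*a^2*g*i - 112*a^2*g*j - 816*a*b^3 - 1512*a*b^2*c - 1224*a*b*c^2 - 600*a*b*d*h - 608*a*b*d*i - 436*a*b*d*j - 608*a*b*f*h - 816*a*b*f*i - 504*a*b*f*j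 - 436*a*b*g*h - 504*a*b*g*i - 408*a*b*g*j - 336*a*c^3 - 144*a*c*d*h - 436*a*c*d*i - 224*a*c*d*j - 436*a*c*f*h - 504*a*c*f*i - 408*a*c*f*j - 224*a*c*g*h - 408*a*c*g*i - 336*a*c*g*j - 110*a*d^3 - 450*a*d^2*f - 108*a*d^2*g - 456*a*d*f^2 - 654*a*d*f*g - 168*a*d*g^2 - 204*a*f^3 - 378*a*f^2*g - 306*a*f*g^2 - 84*a*g^3 - 844*b^4 - 872*b^3*c - 456*b^2*c^2 - 304*b^2*d*h - 408*b^2*d*i - 252*b^2*d*j - 408*b^2*f*h - 1688*b^2*f*i - 436*b^2*f*j - 252*b^2*g*h - 436*b^2*g*i - 152*b^2*g*j - 128*b*c^3 - 436*b*c*d*h - 504*b*c*d*i - 408*b*c*d*j - 504*b*c*f*h - 872*b*c*f*i - 304*b*c*f*j - 408*b*c*g*h - 304*b*c*g*i - 128*b*c*g*j - 150*b*d^3 - 456*b*d^2*f - 327*b*d^2*g - 612*b*d*f^2 - 756*b*d*f*g - 306*b*d*g^2 - 844*b*f^3 - 654*b*f^2*g - 228*b*f*g^2 - 32*b*g^3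 + 2*c^4 - 112*c^2*d*h - 204*c^2*d*i - 168*c^2*d*j - 204*c^2*f*h - 152*c^2*f*i - 64*c^2*f*j - 168*c^2*g*h - 64*c^2*g*i + 4*c^2*g*j - 36*c*d^3 - 327*c*d^2*f - 168*c*d^2*g - 378*c*d*f^2 - 612*c*d*f*g - 252*c*d*g^2 - 218*c*f^3 - 228*c*f^2*g - 96*c*f*g^2 + 2*c*g^3 - 110*d^2*h^2 - 300*d^2*h*i - 72*d^2*h*j - 152*d^2*i^2 - 218*d^2*i*j - 56*d^2*j^2 - 300*d*f*h^2 - 608*d*f*h*i - 436*d*f*h*j - 408*d*f*i^2 - 504*d*f*i*j - 204*d*f*j^2 - 72*d*g*h^2 - 436*d*g*h*i - 224*d*g*h*j - 252*d*g*i^2 - 408*d*g*i*j - 168*d*g*j^2 - 152*f^2*h^2 - 408*f^2*h*i - 252*f^2*h*j - 844*f^2*i^2 - 436*f^2*i*j - 76*f^2*j^2 - 218*f*g*h^2 - 504*f*g*h*i - 408*f*g*h*j - 436*f*g*i^2 - 304*f*g*i*j - 64*f*g*j^2 - 56*g^2*h^2 - 204*g^2*h*i - 168*g^2*h*j - 76*g^2*i^2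 - 64*g^2*i*j + 2*g^2*j^2 + 608*e) * h7
  have h130 : 4*a*b^3 + 4*a*b*f*i + a*f^3 + 2*b^2*d*i + 2*b^2*f*h + 3*b*d*f^2 + 2*d*f*i^2 + 2*f^2*h*i = e := by
    linear_combination (-3)*hev 0 4 0 + (-3)*hev 0 6 4 + (-2)*hev 0 6 1 + (-2)*hev 3 5 2 + (-3)*hev 1 5 2 + hev 6 6 6 + hev 3 1 3 - hev 2 4 2 + (-3)*hev 6 2 2 - hev 2 1 3 + (-2)*hev 0 2 4 + (-2)*hev 6 0 3 + 2*hev 1 4 4 + (-3)*hev 4 3 3 + (-3)*hev 6 4 4 + (1422*a^4 + 1976*a^3*b + 2588*a^3*c + 1584*a^2*b^2 + 2556*a^2*b*c + 1686*a^2*c^2 + 2844*a^2*d*h + 988*a^2*d*i + 1294*a^2*d*j + 988*a^2*f*h + 528*a^2*f*i + 426*a^2*f*j + 1294*a^2*g*h + 426*a^2*g*i + 562*a^2*g*j + 828*a*b^3 + 1212*a*b^2*c + 684*a*b*c^2 + 1976*a*b*d*h + 1056*a*b*d*i + 852*a*b*d*j + 1056*a*b*f*h + 828*a*b*f*i + 404*a*b*f*j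 + 852*a*b*g*h + 404*a*b*g*i + 228*a*b*g*j + 332*a*c^3 + 2588*a*c*d*h + 852*a*c*d*i + 1124*a*c*d*j + 852*a*c*f*h + 404*a*c*f*i + 228*a*c*f*j + 1124*a*c*g*h + 228*a*c*g*i + 332*a*c*g*j + 1422*a*d^3 + 1482*a*d^2*f + 1941*a*d^2*g + 792*a*d*f^2 + 1278*a*d*f*g + 843*a*d*g^2 + 207*a*f^3 + 303*a*f^2*g + 171*a*f*g^2 + 83*a*g^3 + 1416*b^4 + 2124*b^3*c + 1494*b^2*c^2 + 528*b^2*d*h + 414*b^2*d*i + 202*b^2*d*j + 414*b^2*f*h + 2832*b^2*f*i + 1062*b^2*f*j + 202*b^2*g*h + 1062*b^2*g*i + 498*b^2*g*j + 516*b*c^3 + 852*b*c*d*h + 404*b*c*d*i + 228*b*c*d*j + 404*b*c*f*h + 2124*b*c*f*i + 996*b*c*f*j + 228*b*c*g*h + 996*b*c*g*i + 516*b*c*g*j + 494*b*d^3 + 792*b*d^2*f + 639*b*d^2*g + 621*b*d*f^2 + 606*b*d*f*g + 171*b*d*g^2 + 1416*b*f^3 + 1593*b*f^2*g + 747*b*f*g^2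 + 129*b*g^3 + 113*c^4 + 562*c^2*d*h + 114*c^2*d*i + 166*c^2*d*j + 114*c^2*f*h + 498*c^2*f*i + 258*c^2*f*j + 166*c^2*g*h + 258*c^2*g*i + 226*c^2*g*j + 647*c*d^3 + 639*c*d^2*f + 843*c*d^2*g + 303*c*d*f^2 + 342*c*d*f*g + 249*c*d*g^2 + 531*c*f^3 + 747*c*f^2*g + 387*c*f*g^2 + 113*c*g^3 + 1422*d^2*h^2 + 988*d^2*h*i + 1294*d^2*h*j + 264*d^2*i^2 + 426*d^2*i*j + 281*d^2*j^2 + 988*d*f*h^2 + 1056*d*f*h*i + 852*d*f*h*j + 414*d*f*i^2 + 404*d*f*i*j + 114*d*f*j^2 + 1294*d*g*h^2 + 852*d*g*h*i + 1124*d*g*h*j + 202*d*g*i^2 + 228*d*g*i*j + 166*d*g*j^2 + 264*f^2*h^2 + 414*f^2*h*i + 202*f^2*h*j + 1416*f^2*i^2 + 1062*f^2*i*j + 249*f^2*j^2 + 426*f*g*h^2 + 404*f*g*h*i + 228*f*g*h*j + 1062*f*g*i^2 + 996*f*g*i*j + 258*f*g*j^2 + 281*g^2*h^2 + 114*g^2*h*i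 + 166*g^2*h*j + 249*g^2*i^2 + 258*g^2*i*j + 113*g^2*j^2 - 2304*e) * h7
  have hpx : (a*f*j - a*g*i - b*d*j + b*g*h + c*d*i - c*f*h) * (4*c^3 + 4*c*g*j + g^3) = 0 := by
    linear_combination (f*j - g*i)*h103 - (d*j - g*h)*h013 + (4*(d*i - f*h))*h004
  have hpz : (a*f*j - a*g*i - b*d*j + b*g*h + c*d*i - c*f*h) * (2*c^2*g + 2*g^2*j) = 0 := by
    linear_combination (b*g - c*f)*h103 - (a*g - c*d)*h013 + (4*(a*f - b*d))*h004
  have px0 : 4*c^3 + 4*c*g*j + g^3 = 0 := (mul_eq_zero.mp hpx).resolve_left hdet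
  have pz0 : 2*c^2*g + 2*g^2*j = 0 := (mul_eq_zero.mp hpz).resolve_left hdet
  have hcg : c = 0 ∧ g = 0 := by
    have hgq : g * (c^2 + g*j) = 0 := by
      linear_combination 4*pz0 + (-(c^2*g) - g^2*j)*h7
    rcases mul_eq_zero.mp hgq with hg0 | hq
    · have hc4 : c^4 = 0 := by linear_combination h004 - (c*g^2 + 2*c^2*j + g*j^2)*hg0
      exact ⟨pow_eq_zero_iff (by norm_num) |>.mp hc4, hg0⟩
    · have hcg3 : c * g^3 = 0 := by linear_combination h004 - (c^2 + g*j)*hq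
      rcases mul_eq_zero.mp hcg3 with hc0 | hg3
      · have hg3' : g^3 = 0 := by linear_combination px0 - (4*c^2 + 4*g*j)*hc0
        exact ⟨hc0, pow_eq_zero_iff (by norm_num) |>.mp hg3'⟩
      · have hg0 : g = 0 := pow_eq_zero_iff (by norm_num) |>.mp hg3
        have hc2 : c^2 = 0 := by linear_combination hq - j*hg0
        exact ⟨pow_eq_zero_iff (by norm_num) |>.mp hc2, hg0⟩
  obtain ⟨hc0, hg0⟩ := hcg
  have hdd : (a*f - b*d) * j ≠ 0 := fun hz => hdet (by
    linear_combination hz + (b*h - a*i)*hg0 + (d*i - f*h)*hc0)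
  obtain ⟨haf, hj⟩ := mul_ne_zero_iff.mp hdd
  have hf2 : f^2*j^2 = e := by
    linear_combination h022 - (6*b^2*c + 4*b*f*j + 4*b*g*i + 2*c*f*i + 3*f^2*g) * hc0 - (2*b^2*j + 3*b*f*g + 4*f*i*j + g*i^2) * hg0
  have hf : f ≠ 0 := fun hf0 => he (by rw [← hf2, hf0]; ring)
  have hfib : f*i + b^2 = 0 := by
    have t : (2*(f*j)) * (f*i + b^2) = (2*(f*j)) * 0 := by
      linear_combination h031 - (4*b^3 + 4*b*f*i + f^3) * hc0 - (2*b^2*i + 3*b*f^2 + 2*f*i^2) * hg0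
    exact mul_left_cancel₀ (mul_ne_zero h2 (mul_ne_zero hf hj)) t
  have hb0 : b = 0 := by
    have hbf : b * f^3 = 0 := by linear_combination h040 - (f*i + b^2)*hfib
    exact (mul_eq_zero.mp hbf).resolve_right (pow_ne_zero 3 hf)
  have hi0 : i = 0 := by
    have t : f * i = 0 := by linear_combination hfib - b*hb0
    exact (mul_eq_zero.mp t).resolve_left hf
  have hd0 : d = 0 := by
    have t : (2*(f*(j*j))) * d = (2*(f*(j*j))) * 0 := by
      linear_combination h112 - (12*a*b*c + 4*a*f*j + 4*a*g*i + 4*b*d*j + 4*b*g*h + 2*c*d*i + 2*c*f*h + 6*d*f*g) * hc0 - (4*a*b*j + 3*a*f*g + 3*b*d*g + 4*d*i*j + 4*f*h*j + 2*g*h*i) * hg0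
    exact mul_left_cancel₀ (mul_ne_zero h2 (mul_ne_zero hf (mul_ne_zero hj hj))) t
  have hh0 : h = 0 := by
    have t : (2*((f*f)*j)) * h = (2*((f*f)*j)) * 0 := by
      linear_combination h121 - (12*a*b^2 + 4*a*f*i + 4*b*d*i + 4*b*f*h + 3*d*f^2) * hc0 - (4*a*b*i + 3*a*f^2 + 2*b^2*h + 6*b*d*f + 2*d*i^2 + 4*f*h*i) * hg0 - (4*a*f*j + 2*b*d*j) * hb0 - (4*f*i*j) * hd0
    exact mul_left_cancel₀ (mul_ne_zero h2 (mul_ne_zero (mul_ne_zero hf hf) hj)) t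
  have ha4 : a^4 = e := by
    linear_combination h400 - (2*a^2*h + a*d^2 + d*h^2) * hd0
  have ha : a ≠ 0 := fun h0 => he (by rw [← ha4, h0]; ring)
  have hfj : f*j = a^2 := by
    have t : (2*(a*a)) * (f*j) = (2*(a*a)) * (a^2) := by
      linear_combination (h211 - (12*a^2*b + 4*a*d*i + 4*a*f*h + 4*b*d*h + 3*d^2*f) * hc0 - (2*a^2*i + 4*a*b*h + 6*a*d*f + 3*b*d^2 + 4*d*h*i + 2*f*h^2) * hg0 - (4*a*d*j) * hb0 - (2*d*i*j + 4*f*h*j) * hd0) - 2*ha4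
    exact mul_left_cancel₀ (mul_ne_zero h2 (mul_ne_zero ha ha)) t
  have hf3 : f^3 = a^3 := by
    have t : a * f^3 = a * a^3 := by
      linear_combination (h130 - (4*a*b^2 + 4*a*f*i + 2*b*d*i + 2*b*f*h + 3*d*f^2) * hb0 - (2*f*i^2) * hd0 - (2*f^2*i) * hh0) - ha4
    exact mul_left_cancel₀ ha t
  have hj3 : j^3 = a^3 := by
    have t : (f^3) * (j^3) = (f^3) * (a^3) := by
      linear_combination ((f*j)^2 + f*j*a^2 + a^4)*hfj - a^3*hf3
    exact mul_left_cancel₀ (pow_ne_zero 3 hf) t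
  exact ⟨hb0, hc0, hd0, hg0, hh0, hi0, hj, hj3, hfj⟩

theorem stmt_11 (k : Type*) [Field k] [IsAlgClosed k] (hchar : ringChar k = 7) :
    (∀ (M : Matrix.GeneralLinearGroup (Fin 3) k) (e : kˣ),
        substMat (M : Matrix (Fin 3) (Fin 3) k) (Fquartic k)
            = MvPolynomial.C (e : k) * Fquartic k →
        ∃ (s : kˣ) (ω : k), ω ^ 3 = 1 ∧
          (M : Matrix (Fin 3) (Fin 3) k) = (s : k) • Matrix.diagonal ![ω, ω ^ 2, 1]) ∧
    (∀ ω : k, ω ^ 3 = 1 →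
        substMat (Matrix.diagonal ![ω, ω ^ 2, 1]) (Fquartic k)
          = MvPolynomial.C (ω ^ 4) * Fquartic k) ∧
    (∀ M : Matrix.GeneralLinearGroup (Fin 3) k,
        (∃ e : kˣ, substMat (M : Matrix (Fin 3) (Fin 3) k) (Fquartic k)
            = MvPolynomial.C (e : k) * Fquartic k) ↔
        ∃ (s : kˣ) (ω : k), ω ^ 3 = 1 ∧
          (M : Matrix (Fin 3) (Fin 3) k) = (s : k) • Matrix.diagonal ![ω, ω ^ 2, 1]) := by
  haveI : CharP k 7 := hchar ▸ ringChar.charP k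
  have h7 : (7 : k) = 0 := by exact_mod_cast (CharP.cast_eq_zero k 7)
  have main : ∀ (M : Matrix.GeneralLinearGroup (Fin 3) k) (e : kˣ),
      substMat (M : Matrix (Fin 3) (Fin 3) k) (Fquartic k)
          = MvPolynomial.C (e : k) * Fquartic k →
      ∃ (s : kˣ) (ω : k), ω ^ 3 = 1 ∧
        (M : Matrix (Fin 3) (Fin 3) k) = (s : k) • Matrix.diagonal ![ω, ω ^ 2, 1] := by
    intro M e h
    set N : Matrix (Fin 3) (Fin 3) k := (M : Matrix (Fin 3) (Fin 3) k) with hN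
    have hev : ∀ x y z : k,
        ((N 0 0*x + N 0 1*y + N 0 2*z)^2
            + (N 1 0*x + N 1 1*y + N 1 2*z)*(N 2 0*x + N 2 1*y + N 2 2*z))^2
          + (N 0 0*x + N 0 1*y + N 0 2*z)*(N 1 0*x + N 1 1*y + N 1 2*z)^3
        = (e : k) * ((x^2 + y*z)^2 + x*y^3) := by
      intro x y z
      have h2 := congrArg (MvPolynomial.eval ![x, y, z]) h
      simp [substMat, Fquartic, Fin.sum_univ_three] at h2
      linear_combination h2
    have hu : IsUnit N.det := ((Matrix.isUnit_iff_isUnit_det N).mp M.isUnit)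
    rw [Matrix.det_fin_three] at hu
    have hdet : N 0 0*N 1 1*N 2 2 - N 0 0*N 1 2*N 2 1 - N 0 1*N 1 0*N 2 2
        + N 0 1*N 1 2*N 2 0 + N 0 2*N 1 0*N 2 1 - N 0 2*N 1 1*N 2 0 ≠ 0 := hu.ne_zero
    have he : (e : k) ≠ 0 := e.ne_zero
    obtain ⟨hb0, hc0, hd0, hg0, hh0, hi0, hj, hj3, hfj⟩ :=
      stmt11_key h7 (N 0 0) (N 0 1) (N 0 2) (N 1 0) (N 1 1) (N 1 2) (N 2 0) (N 2 1) (N 2 2)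
        (e : k) hdet he hev
    refine ⟨Units.mk0 (N 2 2) hj, N 0 0 / N 2 2, ?_, ?_⟩
    · rw [div_pow, div_eq_one_iff_eq (pow_ne_zero 3 hj)]
      exact hj3.symm
    · ext r c'
      fin_cases r <;> fin_cases c' <;>
        simp only [Matrix.smul_apply, Matrix.diagonal_apply, smul_eq_mul, Fin.isValue,
          Units.val_mk0, Fin.zero_eta, Fin.mk_one, Fin.reduceFinMk, Matrix.cons_val',
          Matrix.cons_val_zero, Matrix.cons_val_one, Matrix.head_cons, Matrix.cons_val_two,
          Matrix.tail_cons] <;>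
        norm_num
      · field_simp
      · exact hb0
      · exact hc0
      · exact hd0
      · field_simp
        linear_combination hfj
      · exact hg0
      · exact hh0
      · exact hi0
  refine ⟨main, ?_, ?_⟩
  · intro ω hω
    simpa using diagSub k 1 ω hω
  · intro M
    constructor
    · rintro ⟨e, he⟩
      exact main M e he
    · rintro ⟨s, ω, hω, hM⟩
      have hωne : ω ≠ 0 := by intro h0; rw [h0] at hω; norm_num at hω
      refine ⟨s ^ 4 * (Units.mk0 ω hωne) ^ 4, ?_⟩
      have hcoe : ((s ^ 4 * (Units.mk0 ω hωne) ^ 4 : kˣ) : k) = (s : k) ^ 4 * ω ^ 4 := by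
        push_cast [Units.val_mk0]
        ring
      rw [hM, diagSub k (s : k) ω hω, hcoe]
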